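/- For any pure two-qubit state ρ = |ψ⟩⟨ψ| on ℂ²⊗ℂ², the geometric quantum discord equals half the squared concurrence: D_g(|ψ⟩⟨ψ|) = (1/2)·C_{|ψ⟩⟨ψ|}², where C_{|ψ⟩⟨ψ|} = √(2(1 − tr[ρ₁²])) and ρ₁ = tr₂ρ. -/

import Mathlib

open Matrix Finset
open scoped Kronecker ComplexOrder

noncomputable section

/-- A quantum state: a positive semidefinite (hence Hermitian) matrix of trace 1. -/
def IsState {n : Type*} [Fintype n] (ρ : Matrix n n ℂ) : Prop :=
  ρ.PosSemidef ∧ ρ.trace = 1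

/-- The pure state (rank-one projection) associated with a vector `ψ`. -/
def pureState {n : Type*} (ψ : n → ℂ) : Matrix n n ℂ :=
  Matrix.vecMulVec ψ (star ψ)

/-- A Bloch basis for `d × d` complex matrices: a family of nonzero traceless Hermitian
matrices with `tr[Υ k * Υ m] = 2 δ_{km}`. -/
def IsBlochBasis (d : ℕ) (Υ : Fin (d ^ 2 - 1) → Matrix (Fin d) (Fin d) ℂ) : Prop :=
  (∀ k, Υ k ≠ 0) ∧ (∀ k, (Υ k).IsHermitian) ∧ (∀ k, (Υ k).trace = 0) ∧
    (∀ k m, (Υ k * Υ m).trace = if k = m then 2 else 0)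

/-- The Bloch vector of a state `ρ` on `ℂ^d` relative to a Bloch basis `Υ`. -/
def blochVector {d : ℕ} (ρ : Matrix (Fin d) (Fin d) ℂ)
    (Υ : Fin (d ^ 2 - 1) → Matrix (Fin d) (Fin d) ℂ) : Fin (d ^ 2 - 1) → ℝ :=
  fun k => Real.sqrt ((d : ℝ) / (2 * ((d : ℝ) - 1))) * ((ρ * Υ k).trace).re

/-- Partial trace over the first tensor factor. -/
def ptrace1 {d₁ d₂ : ℕ} (ρ : Matrix (Fin d₁ × Fin d₂) (Fin d₁ × Fin d₂) ℂ) :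
    Matrix (Fin d₂) (Fin d₂) ℂ :=
  Matrix.of fun j j' => ∑ i, ρ (i, j) (i, j')

/-- Partial trace over the second tensor factor. -/
def ptrace2 {d₁ d₂ : ℕ} (ρ : Matrix (Fin d₁ × Fin d₂) (Fin d₁ × Fin d₂) ℂ) :
    Matrix (Fin d₁) (Fin d₁) ℂ :=
  Matrix.of fun i i' => ∑ j, ρ (i, j) (i', j)

/-- Partial transpose with respect to the second tensor factor. -/
def ptranspose2 {d₁ d₂ : ℕ} (ρ : Matrix (Fin d₁ × Fin d₂) (Fin d₁ × Fin d₂) ℂ) :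
    Matrix (Fin d₁ × Fin d₂) (Fin d₁ × Fin d₂) ℂ :=
  Matrix.of fun p q => ρ (p.1, q.2) (q.1, p.2)

/-- The correlation matrix of a two-qudit state, `T^{ij} = tr[ρ (Υ₁ i ⊗ Υ₂ j)]`. -/
def corrMatrix {d₁ d₂ : ℕ} (ρ : Matrix (Fin d₁ × Fin d₂) (Fin d₁ × Fin d₂) ℂ)
    (Υ₁ : Fin (d₁ ^ 2 - 1) → Matrix (Fin d₁) (Fin d₁) ℂ)
    (Υ₂ : Fin (d₂ ^ 2 - 1) → Matrix (Fin d₂) (Fin d₂) ℂ) :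
    Matrix (Fin (d₁ ^ 2 - 1)) (Fin (d₂ ^ 2 - 1)) ℝ :=
  Matrix.of fun i j => ((ρ * (Υ₁ i ⊗ₖ Υ₂ j)).trace).re

/-- A quantum-classical state `χ = Σ_k α_k σ_k ⊗ |k⟩⟨k|`. -/
def IsQCState {d₁ d₂ : ℕ} (χ : Matrix (Fin d₁ × Fin d₂) (Fin d₁ × Fin d₂) ℂ) : Prop :=
  ∃ (α : Fin d₂ → ℝ) (σ : Fin d₂ → Matrix (Fin d₁) (Fin d₁) ℂ) (e : Fin d₂ → Fin d₂ → ℂ),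
    (∀ k, 0 ≤ α k) ∧ (∑ k, α k = 1) ∧ (∀ k, IsState (σ k)) ∧
    (∀ k l, ∑ i, star (e k i) * e l i = if k = l then (1 : ℂ) else 0) ∧
    χ = ∑ k, (α k : ℂ) • (σ k ⊗ₖ pureState (e k))

/-- The geometric quantum discord (with the Hilbert–Schmidt distance):
`D_g(ρ) = min over quantum-classical χ of tr[(ρ - χ)²]`. -/
def Dg {d₁ d₂ : ℕ} (ρ : Matrix (Fin d₁ × Fin d₂) (Fin d₁ × Fin d₂) ℂ) : ℝ :=
  sInf {x : ℝ | ∃ χ, IsQCState χ ∧ x = (((ρ - χ) * (ρ - χ)).trace).re}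

/-- `η` lists the eigenvalues of the real matrix `G` in decreasing order with algebraic
multiplicities: `η` is antitone and the characteristic polynomial of `G` splits as
`∏ (X - η n)`. -/
def IsEigList {N : ℕ} (G : Matrix (Fin N) (Fin N) ℝ) (η : Fin N → ℝ) : Prop :=
  Antitone η ∧ G.charpoly = ∏ n, (Polynomial.X - Polynomial.C (η n))

/-- A simplex frame in `ℝ^N`: `d` unit vectors summing to zero with pairwise scalar
products `-1/(d-1)`. -/
def IsSimplexFrame {N : ℕ} (d : ℕ) (y : Fin d → Fin N → ℝ) : Prop :=
  (∀ k, ∑ i, y k i ^ 2 = 1) ∧ (∀ i, ∑ k, y k i = 0) ∧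
    (∀ j k, j ≠ k → ∑ i, y j i * y k i = -1 / ((d : ℝ) - 1))

/-- The operator `Π_{Ω_y} = ((d-1)/d) Σ_k y_k y_kᵀ` associated with a simplex frame. -/
def simplexProj {N : ℕ} (d : ℕ) (y : Fin d → Fin N → ℝ) : Matrix (Fin N) (Fin N) ℝ :=
  (((d : ℝ) - 1) / d) • ∑ k, Matrix.vecMulVec (y k) (y k)

/-- The matrix `G(ρ) = ((d₂-1)/(d₁ d₂)) r₂ r₂ᵀ + (1/4) T_ρᵀ T_ρ`. -/
def Gmat {d₁ d₂ : ℕ} (ρ : Matrix (Fin d₁ × Fin d₂) (Fin d₁ × Fin d₂) ℂ)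
    (Υ₁ : Fin (d₁ ^ 2 - 1) → Matrix (Fin d₁) (Fin d₁) ℂ)
    (Υ₂ : Fin (d₂ ^ 2 - 1) → Matrix (Fin d₂) (Fin d₂) ℂ) :
    Matrix (Fin (d₂ ^ 2 - 1)) (Fin (d₂ ^ 2 - 1)) ℝ :=
  (((d₂ : ℝ) - 1) / (d₁ * d₂)) •
      Matrix.vecMulVec (blochVector (ptrace1 ρ) Υ₂) (blochVector (ptrace1 ρ) Υ₂)
    + (4 : ℝ)⁻¹ • ((corrMatrix ρ Υ₁ Υ₂)ᵀ * corrMatrix ρ Υ₁ Υ₂)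

/-- The trace norm (sum of singular values) of a complex square matrix. -/
def traceNorm {n : Type*} [Fintype n] [DecidableEq n] (X : Matrix n n ℂ) : ℝ :=
  ∑ i, Real.sqrt ((Matrix.posSemidef_conjTranspose_mul_self X).1.eigenvalues i)

/-- The negativity `N_ρ = (‖ρ^{T₂}‖₁ - 1)/2`. -/
def negativity {d₁ d₂ : ℕ} (ρ : Matrix (Fin d₁ × Fin d₂) (Fin d₁ × Fin d₂) ℂ) : ℝ :=
  (traceNorm (ptranspose2 ρ) - 1) / 2

/-- The concurrence of a pure two-qudit state, `C = √(2 (1 - tr[ρ₁²]))`, `ρ₁ = tr₂ ρ`. -/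
def concurrence {d₁ d₂ : ℕ} (ρ : Matrix (Fin d₁ × Fin d₂) (Fin d₁ × Fin d₂) ℂ) : ℝ :=
  Real.sqrt (2 * (1 - ((ptrace2 ρ * ptrace2 ρ).trace).re))

end


namespace S4Aux

open Matrix Finset
open scoped Kronecker ComplexOrder

noncomputable section

lemma trace_mul_expand {n : Type*} [Fintype n] (A B : Matrix n n ℂ) :
    (A * B).trace = ∑ p, ∑ q, A p q * B q p := by
  simp [Matrix.trace, Matrix.diag, Matrix.mul_apply]

lemma pureState_apply {n : Type*} (ψ : n → ℂ) (i j : n) :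
    pureState ψ i j = ψ i * star (ψ j) := rfl

lemma trace_pure_mul_pure {n : Type*} [Fintype n] (a b : n → ℂ) :
    (pureState a * pureState b).trace
      = (∑ i, a i * star (b i)) * (∑ i, b i * star (a i)) := by
  rw [trace_mul_expand, Finset.sum_mul_sum]
  simp only [pureState_apply]
  apply Finset.sum_congr rfl; intro p _
  apply Finset.sum_congr rfl; intro q _
  ring

lemma trace_sq_re_nonneg {n : Type*} [Fintype n] {H : Matrix n n ℂ}
    (hH : H.IsHermitian) : 0 ≤ ((H * H).trace).re := by
  have h : ∀ i j, H j i = star (H i j) := fun i j => by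
    conv_lhs => rw [← hH]
    rfl
  rw [trace_mul_expand]
  have : ∀ p q : n, H p q * H q p = (Complex.normSq (H p q) : ℂ) := by
    intro p q
    rw [h q p]
    simp [Complex.star_def, ← Complex.normSq_eq_conj_mul_self, Complex.normSq_conj]
  simp only [this, Complex.re_sum, Complex.ofReal_re]
  exact Finset.sum_nonneg fun p _ => Finset.sum_nonneg fun q _ => Complex.normSq_nonneg _

lemma pureState_isHermitian {n : Type*} (w : n → ℂ) : (pureState w).IsHermitian := by
  ext i j
  simp [pureState, Matrix.conjTranspose_apply, Matrix.vecMulVec_apply, mul_comm]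

lemma pureState_posSemidef {n : Type*} [Fintype n] (w : n → ℂ) : (pureState w).PosSemidef := by
  refine Matrix.PosSemidef.of_dotProduct_mulVec_nonneg (pureState_isHermitian w) fun x => ?_
  have h : dotProduct (star x) (pureState w *ᵥ x)
      = star (∑ j, star (w j) * x j) * (∑ j, star (w j) * x j) := by
    simp only [dotProduct, Matrix.mulVec, pureState_apply, Pi.star_apply, star_sum,
      star_mul', star_star, Finset.mul_sum, Finset.sum_mul]
    rw [Finset.sum_comm]
    refine Finset.sum_congr rfl fun i _ => ?_
    refine Finset.sum_congr rfl fun j _ => ?_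
    ring
  rw [h]
  exact star_mul_self_nonneg _

lemma posSemidef_smul_real {n : Type*} [Fintype n] {M : Matrix n n ℂ} (hM : M.PosSemidef)
    {c : ℝ} (hc : 0 ≤ c) : ((c : ℂ) • M).PosSemidef := by
  refine Matrix.PosSemidef.of_dotProduct_mulVec_nonneg ?_ fun x => ?_
  · unfold Matrix.IsHermitian
    rw [Matrix.conjTranspose_smul, hM.1, Complex.star_def, Complex.conj_ofReal]
  · have h : dotProduct (star x) (((c : ℂ) • M) *ᵥ x)
        = (c : ℂ) * dotProduct (star x) (M *ᵥ x) := by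
      simp [Matrix.smul_mulVec, dotProduct_smul, smul_eq_mul]
    rw [h]
    have h0 : (0:ℂ) ≤ (c:ℂ) := by exact_mod_cast Complex.zero_le_real.mpr hc
    exact mul_nonneg h0 (hM.dotProduct_mulVec_nonneg x)

def vv (ψ : Fin 2 × Fin 2 → ℂ) (e : Fin 2 → Fin 2 → ℂ) (k i : Fin 2) : ℂ :=
  ∑ j, ψ (i, j) * star (e k j)

lemma tr_rho_kron (ψ : Fin 2 × Fin 2 → ℂ) (e : Fin 2 → Fin 2 → ℂ)
    (σ : Matrix (Fin 2) (Fin 2) ℂ) (k : Fin 2) :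
    (pureState ψ * (σ ⊗ₖ pureState (e k))).trace
      = ∑ i, ∑ i', star (vv ψ e k i) * σ i i' * vv ψ e k i' := by
  rw [trace_mul_expand]
  simp only [Fintype.sum_prod_type, pureState_apply, Matrix.kroneckerMap_apply, vv,
    Pi.star_apply, star_sum, star_add, star_mul', star_star, Fin.sum_univ_two]
  ring

lemma tr_kron_kron (e : Fin 2 → Fin 2 → ℂ)
    (hON : ∀ k l, ∑ i, star (e k i) * e l i = if k = l then (1 : ℂ) else 0)
    (σ τ : Matrix (Fin 2) (Fin 2) ℂ) (k l : Fin 2) :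
    ((σ ⊗ₖ pureState (e k)) * (τ ⊗ₖ pureState (e l))).trace
      = if k = l then (σ * τ).trace else 0 := by
  rw [← Matrix.mul_kronecker_mul, Matrix.trace_kronecker, trace_pure_mul_pure]
  have h1 : ∑ i, e k i * star (e l i) = if l = k then (1:ℂ) else 0 := by
    rw [← hON l k]
    exact Finset.sum_congr rfl fun i _ => mul_comm _ _
  have h2 : ∑ i, e l i * star (e k i) = if k = l then (1:ℂ) else 0 := by
    rw [← hON k l]
    exact Finset.sum_congr rfl fun i _ => mul_comm _ _
  rw [h1, h2]
  by_cases h : k = l <;> simp [h, eq_comm]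

lemma sum_mul_star {n : Type*} [Fintype n] (w : n → ℂ) :
    ∑ i, w i * star (w i) = ((∑ i, Complex.normSq (w i) : ℝ) : ℂ) := by
  rw [Complex.ofReal_sum]
  exact Finset.sum_congr rfl fun i _ => Complex.mul_conj _

lemma norm_one_complex (ψ : Fin 2 × Fin 2 → ℂ) (hψ : ∑ i, Complex.normSq (ψ i) = 1) :
    (∑ i, ψ i * star (ψ i)) = 1 := by
  rw [sum_mul_star, hψ, Complex.ofReal_one]

lemma trace_pureState {n : Type*} [Fintype n] (w : n → ℂ) :
    (pureState w).trace = ((∑ i, Complex.normSq (w i) : ℝ) : ℂ) := by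
  rw [← sum_mul_star]
  simp [Matrix.trace, Matrix.diag, pureState_apply]

lemma value_formula (ψ : Fin 2 × Fin 2 → ℂ) (hψ : ∑ i, Complex.normSq (ψ i) = 1)
    (α : Fin 2 → ℝ) (σ : Fin 2 → Matrix (Fin 2) (Fin 2) ℂ) (e : Fin 2 → Fin 2 → ℂ)
    (hON : ∀ k l, ∑ i, star (e k i) * e l i = if k = l then (1 : ℂ) else 0) :
    (((pureState ψ - ∑ k, (α k : ℂ) • (σ k ⊗ₖ pureState (e k))) *
      (pureState ψ - ∑ k, (α k : ℂ) • (σ k ⊗ₖ pureState (e k)))).trace)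
      = 1 - 2 * ∑ k, (α k : ℂ) * (∑ i, ∑ i', star (vv ψ e k i) * σ k i i' * vv ψ e k i')
        + ∑ k, (α k : ℂ)^2 * (σ k * σ k).trace := by
  set ρ := pureState ψ with hρdef
  set χ := ∑ k, (α k : ℂ) • (σ k ⊗ₖ pureState (e k)) with hχdef
  have h1 : (ρ * ρ).trace = 1 := by
    rw [trace_pure_mul_pure, norm_one_complex ψ hψ, one_mul]
  have h2 : (ρ * χ).trace
      = ∑ k, (α k : ℂ) * (∑ i, ∑ i', star (vv ψ e k i) * σ k i i' * vv ψ e k i') := by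
    rw [hχdef]
    simp only [Matrix.mul_sum, Matrix.mul_smul, Matrix.trace_sum, Matrix.trace_smul,
      smul_eq_mul]
    exact Finset.sum_congr rfl fun k _ => by rw [tr_rho_kron]
  have h3 : (χ * χ).trace = ∑ k, (α k : ℂ)^2 * (σ k * σ k).trace := by
    rw [hχdef]
    simp only [Matrix.sum_mul, Matrix.mul_sum, Matrix.smul_mul, Matrix.mul_smul,
      Matrix.trace_sum, Matrix.trace_smul, smul_smul, smul_eq_mul]
    refine Finset.sum_congr rfl fun k _ => ?_
    rw [Finset.sum_congr rfl (fun l _ => by rw [tr_kron_kron e hON])]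
    simp only [mul_ite, mul_zero]
    rw [Finset.sum_ite_eq']
    simp only [Finset.mem_univ, if_true]
    ring
  have hexp : (ρ - χ) * (ρ - χ) = ρ * ρ - ρ * χ - χ * ρ + χ * χ := by
    rw [sub_mul, mul_sub, mul_sub]
    noncomm_ring
  rw [hexp]
  rw [Matrix.trace_add, Matrix.trace_sub, Matrix.trace_sub, h1, h3,
    Matrix.trace_mul_comm χ ρ, h2]
  ring

lemma key_ineq (σ : Matrix (Fin 2) (Fin 2) ℂ) (hσ : σ.IsHermitian) (α : ℝ) (w : Fin 2 → ℂ) :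
    2 * α * ((∑ i, ∑ i', star (w i) * σ i i' * w i').re) - α ^ 2 * ((σ * σ).trace).re
      ≤ (∑ i, Complex.normSq (w i)) ^ 2 := by
  set H : Matrix (Fin 2) (Fin 2) ℂ := (α : ℂ) • σ - pureState w with hHdef
  have hH : H.IsHermitian := by
    unfold Matrix.IsHermitian
    rw [hHdef, Matrix.conjTranspose_sub, Matrix.conjTranspose_smul, hσ,
      (pureState_isHermitian w), Complex.star_def, Complex.conj_ofReal]
  have h0 := trace_sq_re_nonneg hH
  have tσA : (σ * pureState w).trace = ∑ i, ∑ i', star (w i) * σ i i' * w i' := by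
    rw [trace_mul_expand]
    simp only [pureState_apply, Fin.sum_univ_two]
    ring
  have tAσ : (pureState w * σ).trace = ∑ i, ∑ i', star (w i) * σ i i' * w i' := by
    rw [Matrix.trace_mul_comm]; exact tσA
  have tAA : (pureState w * pureState w).trace
      = ((∑ i, Complex.normSq (w i) : ℝ) : ℂ) ^ 2 := by
    rw [trace_pure_mul_pure, sum_mul_star, sq]
  have hexp : (H * H).trace
      = (α:ℂ)^2 * (σ * σ).trace - (α:ℂ) * (σ * pureState w).trace
        - (α:ℂ) * (pureState w * σ).trace + (pureState w * pureState w).trace := by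
    rw [hHdef]
    rw [show ((α:ℂ) • σ - pureState w) * ((α:ℂ) • σ - pureState w)
        = ((α:ℂ) * (α:ℂ)) • (σ * σ) - (α:ℂ) • (σ * pureState w)
          - (α:ℂ) • (pureState w * σ) + pureState w * pureState w by
      rw [sub_mul, mul_sub, mul_sub, Matrix.smul_mul, Matrix.mul_smul, Matrix.smul_mul,
        smul_smul]
      noncomm_ring]
    simp only [Matrix.trace_add, Matrix.trace_sub, Matrix.trace_smul, smul_eq_mul]
    ring
  rw [hexp, tσA, tAσ, tAA] at h0
  set Q := ∑ i, ∑ i', star (w i) * σ i i' * w i' with hQ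
  set s := ∑ i, Complex.normSq (w i) with hs
  have hre : ((α:ℂ)^2 * (σ * σ).trace - (α:ℂ) * Q - (α:ℂ) * Q + ((s:ℝ):ℂ)^2).re
      = α^2 * ((σ * σ).trace).re - α * Q.re - α * Q.re + s^2 := by
    simp [Complex.sub_re, Complex.add_re, Complex.mul_re, Complex.ofReal_re,
      Complex.ofReal_im, pow_two, Complex.mul_im]
  rw [hre] at h0
  nlinarith [h0]

lemma completeness (e : Fin 2 → Fin 2 → ℂ)
    (hON : ∀ k l, ∑ i, star (e k i) * e l i = if k = l then (1 : ℂ) else 0) :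
    ∀ j j', ∑ k, e k j * star (e k j') = if j = j' then (1 : ℂ) else 0 := by
  have hU : (Matrix.of fun j k => e k j)ᴴ * (Matrix.of fun j k => e k j) = 1 := by
    ext k l
    simpa [Matrix.mul_apply, Matrix.conjTranspose_apply, Matrix.one_apply] using hON k l
  have hU2 := mul_eq_one_comm.mp hU
  intro j j'
  have h := congrFun (congrFun (congrArg (fun M => (M : Matrix (Fin 2) (Fin 2) ℂ)) hU2) j) j'
  simpa [Matrix.mul_apply, Matrix.conjTranspose_apply, Matrix.one_apply] using h

def Bmat (ψ : Fin 2 × Fin 2 → ℂ) (e : Fin 2 → Fin 2 → ℂ) (k l : Fin 2) : ℂ :=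
  ∑ i, vv ψ e k i * star (vv ψ e l i)

lemma ptrace2_pureState (ψ : Fin 2 × Fin 2 → ℂ) (i i' : Fin 2) :
    ptrace2 (pureState ψ) i i' = ∑ j, ψ (i, j) * star (ψ (i', j)) := by
  simp [ptrace2, pureState_apply]

lemma hBM (ψ : Fin 2 × Fin 2 → ℂ) (e : Fin 2 → Fin 2 → ℂ)
    (hON : ∀ k l, ∑ i, star (e k i) * e l i = if k = l then (1 : ℂ) else 0) (i i' : Fin 2) :
    ∑ k, vv ψ e k i * star (vv ψ e k i') = ptrace2 (pureState ψ) i i' := by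
  have hc := completeness e hON
  have step : ∑ k, vv ψ e k i * star (vv ψ e k i')
      = ∑ j, ∑ j', ψ (i, j) * star (ψ (i', j')) * (∑ k, e k j' * star (e k j)) := by
    simp only [vv, star_sum, star_add, star_mul', star_star, Fin.sum_univ_two]
    ring
  rw [step, ptrace2_pureState]
  simp only [hc]
  rw [Fin.sum_univ_two, Fin.sum_univ_two, Fin.sum_univ_two]
  norm_num

lemma sum_Bmat_normSq (ψ : Fin 2 × Fin 2 → ℂ) (e : Fin 2 → Fin 2 → ℂ)
    (hON : ∀ k l, ∑ i, star (e k i) * e l i = if k = l then (1 : ℂ) else 0) :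
    ∑ k, ∑ l, Bmat ψ e k l * star (Bmat ψ e k l)
      = (ptrace2 (pureState ψ) * ptrace2 (pureState ψ)).trace := by
  have step : ∑ k, ∑ l, Bmat ψ e k l * star (Bmat ψ e k l)
      = ∑ i, ∑ i', (∑ k, vv ψ e k i * star (vv ψ e k i'))
          * star (∑ l, vv ψ e l i * star (vv ψ e l i')) := by
    simp only [Bmat, vv, star_sum, star_add, star_mul', star_star, Fin.sum_univ_two]
    ring
  rw [step]
  rw [trace_mul_expand]
  refine Finset.sum_congr rfl fun i _ => Finset.sum_congr rfl fun i' _ => ?_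
  rw [hBM ψ e hON i i']
  congr 1
  rw [ptrace2_pureState, ptrace2_pureState]
  simp only [star_sum, star_mul', star_star]
  exact Finset.sum_congr rfl fun j _ => mul_comm _ _

lemma re_of_value (α : Fin 2 → ℝ) (Q c : Fin 2 → ℂ) :
    ((1 : ℂ) - 2 * ∑ k, (α k : ℂ) * Q k + ∑ k, (α k : ℂ)^2 * c k).re
    = 1 - ∑ k, (2 * α k * (Q k).re - (α k)^2 * (c k).re) := by
  simp [Complex.add_re, Complex.sub_re, Complex.mul_re, Fin.sum_univ_two, Complex.ofReal_re,
    Complex.ofReal_im, pow_two, Complex.add_im, Complex.mul_im]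
  ring

lemma Bmat_diag (ψ : Fin 2 × Fin 2 → ℂ) (e : Fin 2 → Fin 2 → ℂ) (k : Fin 2) :
    Bmat ψ e k k = ((∑ i, Complex.normSq (vv ψ e k i) : ℝ) : ℂ) :=
  sum_mul_star _

lemma T_eq_sum_normSq (ψ : Fin 2 × Fin 2 → ℂ) (e : Fin 2 → Fin 2 → ℂ)
    (hON : ∀ k l, ∑ i, star (e k i) * e l i = if k = l then (1 : ℂ) else 0) :
    ((ptrace2 (pureState ψ) * ptrace2 (pureState ψ)).trace).re
      = ∑ k, ∑ l, Complex.normSq (Bmat ψ e k l) := by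
  have h := sum_Bmat_normSq ψ e hON
  have h2 : ∀ k l, Bmat ψ e k l * star (Bmat ψ e k l)
      = ((Complex.normSq (Bmat ψ e k l) : ℝ) : ℂ) := fun k l => Complex.mul_conj _
  rw [← h]
  simp only [h2, ← Complex.ofReal_sum, Complex.ofReal_re]

lemma sum_sq_le_T (ψ : Fin 2 × Fin 2 → ℂ) (e : Fin 2 → Fin 2 → ℂ)
    (hON : ∀ k l, ∑ i, star (e k i) * e l i = if k = l then (1 : ℂ) else 0) :
    ∑ k, (∑ i, Complex.normSq (vv ψ e k i))^2
      ≤ ((ptrace2 (pureState ψ) * ptrace2 (pureState ψ)).trace).re := by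
  rw [T_eq_sum_normSq ψ e hON]
  have hkk : ∀ k, Complex.normSq (Bmat ψ e k k) = (∑ i, Complex.normSq (vv ψ e k i))^2 := by
    intro k
    rw [Bmat_diag, Complex.normSq_ofReal, sq]
  simp only [Fin.sum_univ_two, hkk 0, hkk 1]
  nlinarith [Complex.normSq_nonneg (Bmat ψ e 0 1), Complex.normSq_nonneg (Bmat ψ e 1 0)]

lemma sum_p_one (ψ : Fin 2 × Fin 2 → ℂ) (hψ : ∑ i, Complex.normSq (ψ i) = 1)
    (e : Fin 2 → Fin 2 → ℂ)
    (hON : ∀ k l, ∑ i, star (e k i) * e l i = if k = l then (1 : ℂ) else 0) :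
    ∑ k, ∑ i, Complex.normSq (vv ψ e k i) = 1 := by
  have h : (∑ k, Bmat ψ e k k) = 1 := by
    calc ∑ k, Bmat ψ e k k = ∑ k, ∑ i, vv ψ e k i * star (vv ψ e k i) := rfl
      _ = ∑ i, ∑ k, vv ψ e k i * star (vv ψ e k i) := Finset.sum_comm
      _ = ∑ i : Fin 2, ptrace2 (pureState ψ) i i := by
          exact Finset.sum_congr rfl fun i _ => hBM ψ e hON i i
      _ = ∑ i : Fin 2, ∑ j, ψ (i, j) * star (ψ (i, j)) := by
          exact Finset.sum_congr rfl fun i _ => ptrace2_pureState ψ i i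
      _ = ∑ p : Fin 2 × Fin 2, ψ p * star (ψ p) := by
          rw [Fintype.sum_prod_type]
      _ = 1 := norm_one_complex ψ hψ
  have h' : ((∑ k, ∑ i, Complex.normSq (vv ψ e k i) : ℝ) : ℂ) = 1 := by
    rw [Complex.ofReal_sum, ← h]
    exact Finset.sum_congr rfl fun k _ => (Bmat_diag ψ e k).symm
  exact_mod_cast h'

lemma ptrace1_herm (ψ : Fin 2 × Fin 2 → ℂ) : (ptrace1 (pureState ψ)).IsHermitian := by
  ext j j'
  simp only [ptrace1, Matrix.conjTranspose_apply, Matrix.of_apply, pureState_apply,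
    star_sum, star_mul', star_star]
  exact Finset.sum_congr rfl fun i _ => mul_comm _ _

lemma Bmat_eq_conj (ψ : Fin 2 × Fin 2 → ℂ) (e : Fin 2 → Fin 2 → ℂ) (k l : Fin 2) :
    Bmat ψ e k l = ∑ j, ∑ j', star (e k j) * ptrace1 (pureState ψ) j j' * e l j' := by
  simp only [Bmat, vv, ptrace1, Matrix.of_apply, pureState_apply, star_sum, star_add,
    star_mul', star_star, Fin.sum_univ_two]
  ring

lemma Q_pure (w : Fin 2 → ℂ) (c : ℂ) :
    ∑ i, ∑ i', star (w i) * (c • pureState w) i i' * w i'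
      = c * ((∑ i, w i * star (w i)) * (∑ i, w i * star (w i))) := by
  simp only [Matrix.smul_apply, pureState_apply, smul_eq_mul, Fin.sum_univ_two]
  ring

lemma trace_smul_sq (A : Matrix (Fin 2) (Fin 2) ℂ) (c : ℂ) :
    ((c • A) * (c • A)).trace = c^2 * (A * A).trace := by
  rw [Matrix.smul_mul, Matrix.mul_smul, smul_smul, Matrix.trace_smul, smul_eq_mul, sq]

lemma zero_le_complex_ofReal {r : ℝ} (hr : 0 ≤ r) : (0:ℂ) ≤ (r:ℂ) := by
  exact_mod_cast Complex.zero_le_real.mpr hr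

lemma exists_good_basis (ψ : Fin 2 × Fin 2 → ℂ) :
    ∃ e : Fin 2 → Fin 2 → ℂ,
      (∀ k l, ∑ i, star (e k i) * e l i = if k = l then (1 : ℂ) else 0) ∧
      (∀ k l, k ≠ l → Bmat ψ e k l = 0) := by
  have hA := ptrace1_herm ψ
  set U : Matrix (Fin 2) (Fin 2) ℂ :=
    (Matrix.IsHermitian.eigenvectorUnitary hA : Matrix (Fin 2) (Fin 2) ℂ) with hUdef
  have hUmem := (Matrix.IsHermitian.eigenvectorUnitary hA).2
  have h1 : star U * U = 1 := hUmem.1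
  refine ⟨fun k j => U j k, ?_, ?_⟩
  · intro k l
    have h := congrFun (congrFun h1 k) l
    simpa [Matrix.mul_apply, Matrix.conjTranspose_apply, Matrix.one_apply] using h
  · intro k l hkl
    have hdiag : star U * ptrace1 (pureState ψ) * U
        = Matrix.diagonal (RCLike.ofReal ∘ hA.eigenvalues) := by
      have := hA.conjStarAlgAut_star_eigenvectorUnitary
      rwa [Unitary.conjStarAlgAut_star_apply] at this
    rw [Bmat_eq_conj]
    have h2 : ∑ j, ∑ j', star (U j k) * ptrace1 (pureState ψ) j j' * U j' l
        = (star U * ptrace1 (pureState ψ) * U) k l := by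
      simp only [Matrix.mul_apply, Matrix.conjTranspose_apply, Fin.sum_univ_two,
        Matrix.star_apply]
      ring
    rw [h2, hdiag]
    simp [Matrix.diagonal_apply, hkl]

end
end S4Aux

/-- for any pure two-qubit state `|ψ⟩⟨ψ|` on `ℂ²⊗ℂ²`,
`D_g(|ψ⟩⟨ψ|) = (1/2) C²`, where `C = √(2(1 - tr[ρ₁²]))` and `ρ₁ = tr₂ ρ`. -/
theorem stmt4 (ψ : Fin 2 × Fin 2 → ℂ) (hψ : ∑ i, Complex.normSq (ψ i) = 1) :
    Dg (pureState ψ) = 2⁻¹ * concurrence (pureState ψ) ^ 2 := by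
  classical
  have hT1 : ∀ (e : Fin 2 → Fin 2 → ℂ),
      (∀ k l, ∑ i, star (e k i) * e l i = if k = l then (1 : ℂ) else 0) → True := fun _ _ => trivial
  set T : ℝ := (((ptrace2 (pureState ψ)) * (ptrace2 (pureState ψ))).trace).re with hTdef
  -- lower bound
  have hlb : ∀ x ∈ {x : ℝ | ∃ χ, IsQCState χ ∧
      x = (((pureState ψ - χ) * (pureState ψ - χ)).trace).re}, 1 - T ≤ x := by
    rintro x ⟨χ, ⟨α, σ, e, hα, hαs, hσ, hON, hχ⟩, hx⟩
    rw [hx, hχ, S4Aux.value_formula ψ hψ α σ e hON,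
      S4Aux.re_of_value α
        (fun k => ∑ i, ∑ i', star (S4Aux.vv ψ e k i) * σ k i i' * S4Aux.vv ψ e k i')
        (fun k => (σ k * σ k).trace)]
    have hk : ∀ k, 2 * α k * ((∑ i, ∑ i', star (S4Aux.vv ψ e k i) * σ k i i' *
          S4Aux.vv ψ e k i').re) - α k ^ 2 * ((σ k * σ k).trace).re
        ≤ (∑ i, Complex.normSq (S4Aux.vv ψ e k i))^2 :=
      fun k => S4Aux.key_ineq (σ k) (hσ k).1.1 (α k) (S4Aux.vv ψ e k)
    have hsum : ∑ k, (2 * α k * ((∑ i, ∑ i', star (S4Aux.vv ψ e k i) * σ k i i' *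
          S4Aux.vv ψ e k i').re) - α k ^ 2 * ((σ k * σ k).trace).re) ≤ T :=
      le_trans (Finset.sum_le_sum fun k _ => hk k) (S4Aux.sum_sq_le_T ψ e hON)
    linarith
  -- upper bound witness
  obtain ⟨e, hON, hBoff⟩ := S4Aux.exists_good_basis ψ
  set p : Fin 2 → ℝ := fun k => ∑ i, Complex.normSq (S4Aux.vv ψ e k i) with hpdef
  have hp0 : ∀ k, 0 ≤ p k := fun k => Finset.sum_nonneg fun i _ => Complex.normSq_nonneg _
  have hps : ∑ k, p k = 1 := S4Aux.sum_p_one ψ hψ e hON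
  set σ : Fin 2 → Matrix (Fin 2) (Fin 2) ℂ :=
    fun k => if p k = 0 then Matrix.diagonal (fun _ => (2⁻¹ : ℂ))
      else (((p k)⁻¹ : ℝ) : ℂ) • pureState (S4Aux.vv ψ e k) with hσdef
  have hvz : ∀ k, p k = 0 → ∀ i, S4Aux.vv ψ e k i = 0 := by
    intro k hk i
    have h := (Finset.sum_eq_zero_iff_of_nonneg
      (fun i _ => Complex.normSq_nonneg (S4Aux.vv ψ e k i))).1 hk i (Finset.mem_univ i)
    exact Complex.normSq_eq_zero.mp h
  have hσstate : ∀ k, IsState (σ k) := by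
    intro k
    by_cases hk : p k = 0
    · have hσk : σ k = Matrix.diagonal (fun _ => (2⁻¹ : ℂ)) := by
        simp only [hσdef]; exact if_pos hk
      rw [hσk]
      constructor
      · refine Matrix.PosSemidef.diagonal fun i => ?_
        have h2 : ((2⁻¹ : ℝ) : ℂ) = (2⁻¹ : ℂ) := by norm_num
        rw [← h2]
        exact S4Aux.zero_le_complex_ofReal (by norm_num)
      · rw [Matrix.trace_diagonal, Fin.sum_univ_two]
        norm_num
    · have hσk : σ k = (((p k)⁻¹ : ℝ) : ℂ) • pureState (S4Aux.vv ψ e k) := by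
        simp only [hσdef]; exact if_neg hk
      rw [hσk]
      constructor
      · exact S4Aux.posSemidef_smul_real (S4Aux.pureState_posSemidef _)
          (inv_nonneg.mpr (hp0 k))
      · rw [Matrix.trace_smul, S4Aux.trace_pureState]
        rw [smul_eq_mul, ← Complex.ofReal_mul, inv_mul_cancel₀ hk, Complex.ofReal_one]
  have hQC : IsQCState (∑ k, ((p k : ℝ) : ℂ) • (σ k ⊗ₖ pureState (e k))) :=
    ⟨p, σ, e, hp0, hps, hσstate, hON, rfl⟩
  have hval : (((pureState ψ - ∑ k, ((p k : ℝ) : ℂ) • (σ k ⊗ₖ pureState (e k))) *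
      (pureState ψ - ∑ k, ((p k : ℝ) : ℂ) • (σ k ⊗ₖ pureState (e k)))).trace).re
      = 1 - ∑ k, (p k)^2 := by
    rw [S4Aux.value_formula ψ hψ p σ e hON,
      S4Aux.re_of_value p
        (fun k => ∑ i, ∑ i', star (S4Aux.vv ψ e k i) * σ k i i' * S4Aux.vv ψ e k i')
        (fun k => (σ k * σ k).trace)]
    congr 1
    refine Finset.sum_congr rfl fun k _ => ?_
    by_cases hk : p k = 0
    · have hv := hvz k hk
      have hQ0 : (∑ i, ∑ i', star (S4Aux.vv ψ e k i) * σ k i i' * S4Aux.vv ψ e k i')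
          = 0 := by
        apply Finset.sum_eq_zero; intro i _
        apply Finset.sum_eq_zero; intro i' _
        rw [hv i]
        simp
      rw [hQ0, hk]
      simp
    · have hσk : σ k = (((p k)⁻¹ : ℝ) : ℂ) • pureState (S4Aux.vv ψ e k) := by
        simp only [hσdef]; exact if_neg hk
      have hsm : (∑ i, S4Aux.vv ψ e k i * star (S4Aux.vv ψ e k i)) = ((p k : ℝ) : ℂ) :=
        S4Aux.sum_mul_star _
      have hQ : (∑ i, ∑ i', star (S4Aux.vv ψ e k i) * σ k i i' * S4Aux.vv ψ e k i')
          = ((p k : ℝ) : ℂ) := by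
        rw [hσk, S4Aux.Q_pure, hsm]
        have harith : (p k)⁻¹ * (p k * p k) = p k := by field_simp
        calc (((p k)⁻¹ : ℝ) : ℂ) * (((p k : ℝ) : ℂ) * ((p k : ℝ) : ℂ))
            = (((p k)⁻¹ * (p k * p k) : ℝ) : ℂ) := by push_cast; ring
          _ = ((p k : ℝ) : ℂ) := by rw [harith]
      have hc : ((σ k * σ k).trace) = 1 := by
        rw [hσk, S4Aux.trace_smul_sq, S4Aux.trace_pure_mul_pure, hsm]
        have harith : ((p k)⁻¹)^2 * (p k * p k) = 1 := by
          field_simp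
          try ring
        calc (((p k)⁻¹ : ℝ) : ℂ)^2 * (((p k : ℝ) : ℂ) * ((p k : ℝ) : ℂ))
            = ((((p k)⁻¹)^2 * (p k * p k) : ℝ) : ℂ) := by push_cast; ring
          _ = 1 := by rw [harith, Complex.ofReal_one]
      rw [hQ, hc]
      simp only [Complex.ofReal_re, Complex.one_re, pow_two]
      ring
  have hsumT : ∑ k, (p k)^2 = T := by
    rw [hTdef, S4Aux.T_eq_sum_normSq ψ e hON]
    have hkk : ∀ k, Complex.normSq (S4Aux.Bmat ψ e k k) = (p k)^2 := by
      intro k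
      rw [S4Aux.Bmat_diag, Complex.normSq_ofReal, sq, hpdef]
    simp only [Fin.sum_univ_two]
    rw [hBoff 0 1 (by decide), hBoff 1 0 (by decide), hkk 0, hkk 1]
    simp
  have hmem : (1 - T) ∈ {x : ℝ | ∃ χ, IsQCState χ ∧
      x = (((pureState ψ - χ) * (pureState ψ - χ)).trace).re} := by
    refine ⟨∑ k, ((p k : ℝ) : ℂ) • (σ k ⊗ₖ pureState (e k)), hQC, ?_⟩
    rw [hval, hsumT]
  have hDg : Dg (pureState ψ) = 1 - T := by
    unfold Dg
    apply le_antisymm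
    · exact csInf_le ⟨1 - T, fun x hx => hlb x hx⟩ hmem
    · exact le_csInf ⟨1 - T, hmem⟩ hlb
  have hTle1 : T ≤ 1 := by
    rw [← hsumT]
    have h0 := hp0 0
    have h1 := hp0 1
    rw [Fin.sum_univ_two] at hps ⊢
    nlinarith
  rw [hDg]
  unfold concurrence
  rw [← hTdef]
  rw [Real.sq_sqrt (by linarith : (0:ℝ) ≤ 2 * (1 - T))]
  ring
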